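/- There exist polynomials S_{ij} ∈ ℂ[X] for 1 ≤ i,j ≤ n such that for every ζ ∈ ℂ with |ζ| = 1 and all 1 ≤ i,j ≤ n one has (conj ζ)^{k_0} · Σ_{ℓ=1}^{d} c_ℓ · P_{ℓ,w_i w_j}((1−ζ)V, (1−conj ζ)·conj V) = (1 − conj ζ)^{D_1−2} · S_{ij}(conj ζ); that is, the left-hand side is an antiholomorphic polynomial in ζ divided by the stated factor. -/

import Mathlib

open ComplexConjugate

noncomputable section

open MvPolynomial in
lemma aux_mem_support_pderiv {σ : Type*} [DecidableEq σ] {p : MvPolynomial σ ℂ} {x : σ}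
    {μ : σ →₀ ℕ} (h : μ ∈ (pderiv x p).support) :
    μ + Finsupp.single x 1 ∈ p.support := by
  classical
  by_contra hc
  have hco : coeff (μ + Finsupp.single x 1) p = 0 := by
    simpa [MvPolynomial.mem_support_iff] using hc
  apply MvPolynomial.mem_support_iff.mp h
  conv_lhs => rw [p.as_sum]
  rw [map_sum]
  rw [MvPolynomial.coeff_sum]
  apply Finset.sum_eq_zero
  intro ν hν
  rw [pderiv_monomial, coeff_monomial]
  split_ifs with he
  · by_cases hx : ν x = 0
    · simp [hx]
    · exfalso
      have hle : Finsupp.single x 1 ≤ ν := by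
        rw [Finsupp.single_le_iff]
        omega
      have : ν = μ + Finsupp.single x 1 := by
        rw [← he, tsub_add_cancel_of_le hle]
      rw [this] at hν
      exact (MvPolynomial.mem_support_iff.mp hν) hco
  · rfl

lemma aux_key (ζ : ℂ) (hζ : ζ * conj ζ = 1) (a b k0 m : ℕ) (ha : a ≤ k0) (hab : m ≤ a + b) :
    conj ζ ^ k0 * ((1 - ζ) ^ a * (1 - conj ζ) ^ b) =
      (1 - conj ζ) ^ m * ((-1 : ℂ) ^ a * conj ζ ^ (k0 - a) * (1 - conj ζ) ^ (a + b - m)) := by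
  have h1 : 1 - ζ = (-1) * (ζ * (1 - conj ζ)) := by linear_combination -hζ
  have h2 : ζ ^ a * conj ζ ^ a = 1 := by rw [← mul_pow, hζ, one_pow]
  have h3 : (1 - conj ζ) ^ (a + b) = (1 - conj ζ) ^ m * (1 - conj ζ) ^ (a + b - m) := by
    rw [← pow_add, Nat.add_sub_cancel' hab]
  have h4 : conj ζ ^ k0 = conj ζ ^ (k0 - a) * conj ζ ^ a := by
    rw [← pow_add, Nat.sub_add_cancel ha]
  calc conj ζ ^ k0 * ((1 - ζ) ^ a * (1 - conj ζ) ^ b)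
      = (-1 : ℂ) ^ a * conj ζ ^ (k0 - a) * (ζ ^ a * conj ζ ^ a) * (1 - conj ζ) ^ (a + b) := by
        rw [h1, h4, mul_pow, mul_pow, pow_add]; ring
    _ = (-1 : ℂ) ^ a * conj ζ ^ (k0 - a) * (1 - conj ζ) ^ (a + b) := by rw [h2, mul_one]
    _ = _ := by rw [h3]; ring

theorem stmt1
    (n d : ℕ) (hn : 1 ≤ n) (hd : 1 ≤ d)
    (D k : Fin d → ℕ) (k0 : ℕ)
    (hD1 : 2 ≤ D ⟨0, hd⟩) (hD1le : ∀ ℓ, D ⟨0, hd⟩ ≤ D ℓ)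
    (hklow : ∀ ℓ, D ℓ ≤ 2 * k ℓ) (hkhigh : ∀ ℓ, k ℓ ≤ D ℓ - 1)
    (hk0 : ∀ ℓ, k ℓ ≤ k0) (hk0mem : ∃ ℓ, k ℓ = k0)
    (P : Fin d → MvPolynomial (Fin n ⊕ Fin n) ℂ)
    (hsupp : ∀ ℓ, ∀ μ ∈ (P ℓ).support,
      ((∑ i, μ (Sum.inl i)) + (∑ i, μ (Sum.inr i)) = D ℓ ∧
        D ℓ - k ℓ ≤ ∑ i, μ (Sum.inl i)) ∧ (∑ i, μ (Sum.inl i)) ≤ k ℓ)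
    (hreal : ∀ ℓ μ, MvPolynomial.coeff μ (P ℓ) =
      conj (MvPolynomial.coeff
        (Finsupp.equivMapDomain (Equiv.sumComm (Fin n) (Fin n)) μ) (P ℓ)))
    (c : Fin d → ℝ) (V : Fin n → ℂ) (hV : V ≠ 0) :
    ∃ S : Fin n → Fin n → Polynomial ℂ,
      ∀ ζ : ℂ, ‖ζ‖ = 1 → ∀ i j,
        (conj ζ) ^ k0 * ∑ ℓ, (c ℓ : ℂ) *
          MvPolynomial.eval
            (Sum.elim (fun p => (1 - ζ) * V p)
              (fun p => (1 - conj ζ) * conj (V p)))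
            (MvPolynomial.pderiv (Sum.inr i) (MvPolynomial.pderiv (Sum.inr j) (P ℓ)))
        = (1 - conj ζ) ^ (D ⟨0, hd⟩ - 2) * (S i j).eval (conj ζ) := by
  classical
  refine ⟨fun i j => ∑ ℓ, Polynomial.C (c ℓ : ℂ) *
    ∑ μ ∈ (MvPolynomial.pderiv (Sum.inr i) (MvPolynomial.pderiv (Sum.inr j) (P ℓ))).support,
      Polynomial.C (MvPolynomial.coeff μ
            (MvPolynomial.pderiv (Sum.inr i) (MvPolynomial.pderiv (Sum.inr j) (P ℓ))) *
          (∏ p, V p ^ μ (Sum.inl p)) * (∏ p, conj (V p) ^ μ (Sum.inr p)) *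
          (-1) ^ (∑ p, μ (Sum.inl p))) *
        Polynomial.X ^ (k0 - ∑ p, μ (Sum.inl p)) *
        (1 - Polynomial.X) ^
          ((∑ p, μ (Sum.inl p)) + (∑ p, μ (Sum.inr p)) - (D ⟨0, hd⟩ - 2)), ?_⟩
  intro ζ hζ i j
  have hζζ : ζ * conj ζ = 1 := by
    have hns : Complex.normSq ζ = 1 := by
      rw [Complex.normSq_eq_norm_sq, hζ, one_pow]
    rw [Complex.mul_conj, hns]
    norm_num
  rw [Polynomial.eval_finset_sum, Finset.mul_sum, Finset.mul_sum]
  refine Finset.sum_congr rfl fun ℓ _ => ?_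
  rw [MvPolynomial.eval_eq', Polynomial.eval_mul, Polynomial.eval_C, Polynomial.eval_finset_sum,
      mul_left_comm, mul_left_comm ((1 - conj ζ) ^ (D ⟨0, hd⟩ - 2))]
  congr 1
  rw [Finset.mul_sum, Finset.mul_sum]
  refine Finset.sum_congr rfl fun μ hμ => ?_
  have hν := aux_mem_support_pderiv (aux_mem_support_pderiv hμ)
  set ν : (Fin n ⊕ Fin n) →₀ ℕ :=
    μ + Finsupp.single (Sum.inr i) 1 + Finsupp.single (Sum.inr j) 1 with hνdef
  have hsl : ∑ p, ν (Sum.inl p) = ∑ p, μ (Sum.inl p) := by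
    simp [hνdef, Finsupp.add_apply, Finsupp.single_apply]
  have hsr : ∑ p, ν (Sum.inr p) = (∑ p, μ (Sum.inr p)) + 2 := by
    simp [hνdef, Finsupp.add_apply, Finsupp.single_apply, Finset.sum_add_distrib]
  obtain ⟨⟨hsum, _⟩, hup⟩ := hsupp ℓ ν hν
  rw [hsl] at hup
  rw [hsl, hsr] at hsum
  have ha : (∑ p, μ (Sum.inl p)) ≤ k0 := le_trans hup (hk0 ℓ)
  have hab : D ⟨0, hd⟩ - 2 ≤ (∑ p, μ (Sum.inl p)) + (∑ p, μ (Sum.inr p)) := by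
    have := hD1le ℓ; omega
  simp only [Polynomial.eval_mul, Polynomial.eval_pow, Polynomial.eval_C, Polynomial.eval_X,
    Polynomial.eval_sub, Polynomial.eval_one]
  rw [Fintype.prod_sum_type]
  simp only [Sum.elim_inl, Sum.elim_inr, mul_pow]
  rw [Finset.prod_mul_distrib, Finset.prod_mul_distrib, Finset.prod_pow_eq_pow_sum,
      Finset.prod_pow_eq_pow_sum]
  linear_combination (MvPolynomial.coeff μ
      (MvPolynomial.pderiv (Sum.inr i) (MvPolynomial.pderiv (Sum.inr j) (P ℓ))) *
      (∏ p, V p ^ μ (Sum.inl p)) * (∏ p, conj (V p) ^ μ (Sum.inr p))) *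
    aux_key ζ hζζ (∑ p, μ (Sum.inl p)) (∑ p, μ (Sum.inr p)) k0 (D ⟨0, hd⟩ - 2) ha hab
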